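/- Let e₁ = (x₁,y₁), …, e_k = (x_k,y_k) be directed edges of the complete directed graph G on n vertices such that the 2k endpoints x₁, y₁, …, x_k, y_k are pairwise distinct and all different from the source s. If S is a valid relaxation sequence for G, then for every permutation σ of {1, …, k}, the sequence (e_{σ(1)}, …, e_{σ(k)}) is a subsequence of S. -/

import Mathlib

/-- `S` is a valid relaxation sequence for the complete directed graph on vertex
type `α` with source `s`: `S` contains (as a subsequence, in order but not
necessarily contiguously) the edge sequence of every simple path starting at `s`. -/
def IsValidRelaxSeq {α : Type*} (s : α) (S : List (α × α)) : Prop :=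
  ∀ p : List α, p ≠ [] → p.head? = some s → p.Nodup → (p.zip p.tail).Sublist S

/-- Flatten a list of edges into the list of their endpoints. -/
def flatE {α : Type*} (L : List (α × α)) : List α :=
  L.flatMap fun e => [e.1, e.2]

lemma sublist_zip_flat {α : Type*} (L : List (α × α)) (a : α) :
    L.Sublist ((a :: flatE L).zip (flatE L)) := by
  induction L generalizing a with
  | nil => simp
  | cons e L ih =>
    obtain ⟨u, v⟩ := e
    simpa [flatE, List.zip] using
      ((ih v).cons₂ (u, v)).cons (a, u)

theorem stmt_2 {n : ℕ} (hn : 2 ≤ n) (s : Fin n) (k : ℕ) (x y : Fin k → Fin n)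
    (hinj : Function.Injective (Sum.elim x y : Fin k ⊕ Fin k → Fin n))
    (hxs : ∀ i, x i ≠ s) (hys : ∀ i, y i ≠ s)
    (S : List (Fin n × Fin n)) (hS : IsValidRelaxSeq s S)
    (σ : Equiv.Perm (Fin k)) :
    (List.ofFn fun i => (x (σ i), y (σ i))).Sublist S := by
  set L : List (Fin n × Fin n) := List.ofFn fun i => (x (σ i), y (σ i)) with hL
  have hxy : ∀ i j, x i ≠ y j := by
    intro i j h
    have := hinj (a₁ := Sum.inl i) (a₂ := Sum.inr j) (by simpa using h)
    simp at this
  have hxinj : Function.Injective x := fun i j h => by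
    have := hinj (a₁ := Sum.inl i) (a₂ := Sum.inl j) (by simpa using h)
    simpa using this
  have hyinj : Function.Injective y := fun i j h => by
    have := hinj (a₁ := Sum.inr i) (a₂ := Sum.inr j) (by simpa using h)
    simpa using this
  -- the path
  set q : List (Fin n) := flatE L with hq
  have hqmem : ∀ a ∈ q, ∃ i, a = x i ∨ a = y i := by
    intro a ha
    simp only [hq, flatE, List.mem_flatMap, hL, List.mem_ofFn] at ha
    obtain ⟨e, ⟨i, hi⟩, hae⟩ := ha
    subst hi
    simp at hae
    rcases hae with h | h
    · exact ⟨σ i, Or.inl h⟩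
    · exact ⟨σ i, Or.inr h⟩
  have hsq : s ∉ q := by
    intro hs
    obtain ⟨i, h | h⟩ := hqmem s hs
    · exact hxs i h.symm
    · exact hys i h.symm
  have hqnd : q.Nodup := by
    have : q = (List.ofFn fun i => [x (σ i), y (σ i)]).flatten := by
      simp [hq, flatE, List.flatMap_def, hL, List.map_ofFn, Function.comp_def]
    rw [this, List.nodup_flatten]
    constructor
    · intro l' hl'
      simp only [List.mem_ofFn] at hl'
      obtain ⟨i, hi⟩ := hl'
      subst hi
      simp [List.nodup_cons, hxy]
    · rw [List.pairwise_ofFn]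
      intro i j hij
      intro a ha hb
      simp at ha hb
      rcases ha with ha | ha <;> rcases hb with hb | hb
      · exact (fun h => (Fin.lt_iff_val_lt_val.mp hij).ne
          (congrArg Fin.val (σ.injective (hxinj h)))) (ha ▸ hb ▸ rfl)
      · exact hxy _ _ (ha.symm.trans hb)
      · exact hxy _ _ (hb.symm.trans ha)
      · exact (fun h => (Fin.lt_iff_val_lt_val.mp hij).ne
          (congrArg Fin.val (σ.injective (hyinj h)))) (ha ▸ hb ▸ rfl)
  have hpath := hS (s :: q) (by simp) (by simp) (by simp [List.nodup_cons, hsq, hqnd])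
  have hzip : ((s :: q).zip (s :: q).tail) = ((s :: q).zip q) := rfl
  refine (sublist_zip_flat L s).trans ?_
  rw [← hq]
  exact hzip ▸ hpath
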